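/- Let D be a Ramsey ultrafilter on ℕ and ρ : ℕ^{<ω} → ω₁ a function such that for every t with ρ(t) > 0, ρ(t) is the minimal ordinal α > 0 such that { k ∈ ℕ : ρ(t⌢k) < α } ∈ D⁺. Then for each t with ρ(t) a limit ordinal or successor with ρ(t) > 0, there is D_t ∈ D such that the sequence ( ρ(t⌢k) )_{k ∈ D_t} is (weakly) increasing and, if ρ(t) is a limit, cofinal in ρ(t). -/

import Mathlib

open Ordinal Cardinal

/-- for a Ramsey ultrafilter `D` and a rank function
`ρ : ℕ^{<ω} → ω₁` such that `ρ t`, when positive, is the least `α > 0` with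
`{k : ρ(t⌢k) < α} ∈ D`, every `t` with `ρ t > 0` admits `D_t ∈ D` on which
`k ↦ ρ(t⌢k)` is weakly increasing and, when `ρ t` is a limit, cofinal in `ρ t`. -/
theorem stmt_9 (D : Ultrafilter ℕ)
    (hRamsey : ∀ f : ℕ → Ordinal.{0}, ∃ A ∈ D,
      (∀ m ∈ A, ∀ n ∈ A, f m = f n) ∨ (∀ m ∈ A, ∀ n ∈ A, m < n → f m < f n))
    (ρ : List ℕ → Ordinal.{0})
    (hω₁ : ∀ t, ρ t < (aleph 1).ord)
    (hrank : ∀ t : List ℕ, 0 < ρ t →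
      ({k : ℕ | ρ (t ++ [k]) < ρ t} ∈ D ∧
        ∀ α : Ordinal.{0}, 0 < α → {k : ℕ | ρ (t ++ [k]) < α} ∈ D → ρ t ≤ α)) :
    ∀ t : List ℕ, 0 < ρ t → ∃ Dt ∈ D,
      (∀ m ∈ Dt, ∀ n ∈ Dt, m ≤ n → ρ (t ++ [m]) ≤ ρ (t ++ [n])) ∧
      (Order.IsSuccLimit (ρ t) → ∀ β < ρ t, ∃ k ∈ Dt, β ≤ ρ (t ++ [k])) := by
  intro t ht
  obtain ⟨A, hA, hAcase⟩ := hRamsey (fun k => ρ (t ++ [k]))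
  obtain ⟨hB, hmin⟩ := hrank t ht
  refine ⟨A ∩ {k : ℕ | ρ (t ++ [k]) < ρ t}, D.inter_mem hA hB, ?_, ?_⟩
  · intro m hm n hn hmn
    rcases hAcase with hc | hi
    · exact le_of_eq (hc m hm.1 n hn.1)
    · rcases lt_or_eq_of_le hmn with h | h
      · exact le_of_lt (hi m hm.1 n hn.1 h)
      · exact le_of_eq (by rw [h])
  · intro _ β hβ
    by_contra hcon
    push_neg at hcon
    have hsub : A ∩ {k : ℕ | ρ (t ++ [k]) < ρ t} ⊆ {k : ℕ | ρ (t ++ [k]) < β} := by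
      intro k hk
      exact hcon k hk
    have hβD : {k : ℕ | ρ (t ++ [k]) < β} ∈ D :=
      D.toFilter.mem_of_superset (D.inter_mem hA hB) hsub
    have hβpos : 0 < β := by
      obtain ⟨k, hk⟩ := Ultrafilter.nonempty_of_mem (f := D) (D.inter_mem hA hB)
      exact lt_of_le_of_lt zero_le (hcon k hk)
    exact absurd (hmin β hβpos hβD) (not_le_of_gt hβ)
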